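/- Let R, R' and U be TRSs over a signature Σ and let T be a set of ground terms such that SN_T(U/(R ∪ R')) holds. Let A = (A,[[·]]_A,≥) be a monotone partial model for R ∪ R' ∪ U with T ⊆ L(A), and let B = (B,[[·]]_B,≻,⊒) be an extended well-founded ν-monotone Σ_lab-algebra, where ν is the replacement map on Σ_lab given by ν(f^{(a₁,…,aₙ)}) = {1,…,n} \ {i : aᵢ ∈ NF_A(R ∪ R')}, such that: (1) (B,≻) is a model for lab_A(R'); (2) (B,⊒) is a model for lab_A(R); and (3) for all f ∈ Σ, all tuples a⃗₁ a a⃗₂ and a⃗₁ a' a⃗₂ in A^{ar(f)} with a ≥ a' and both labelled symbols in Σ_lab, and all b₁,…,b_{ar(f)} ∈ B, one has [[f^{a⃗₁ a a⃗₂}]]_B(b₁,…,b_{ar(f)}) ⊒ [[f^{a⃗₁ a' a⃗₂}]]_B(b₁,…,b_{ar(f)}). Then SN_T((U ∪ R')/R) holds. -/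

import Mathlib

namespace LocalTerm

/-- Terms over a signature `F` with arities `ar` and variables `X`. -/
inductive Tm (F : Type) (ar : F → ℕ) (X : Type) : Type
  | var : X → Tm F ar X
  | app : (f : F) → (Fin (ar f) → Tm F ar X) → Tm F ar X

/-- Substitution. -/
def subst {F : Type} {ar : F → ℕ} {X Y : Type} (σ : X → Tm F ar Y) :
    Tm F ar X → Tm F ar Y
  | .var x => σ x
  | .app f ts => .app f fun i => subst σ (ts i)

/-- One-step rewrite relation of a set `R` of rules (over variables `X`),
acting on terms over variables `V`: a rule instance inside a one-hole context. -/
inductive Rw {F : Type} {ar : F → ℕ} {X V : Type}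
    (R : Set (Tm F ar X × Tm F ar X)) : Tm F ar V → Tm F ar V → Prop
  | rule {l r : Tm F ar X} (h : (l, r) ∈ R) (σ : X → Tm F ar V) :
      Rw R (subst σ l) (subst σ r)
  | ctxt {f : F} {ts : Fin (ar f) → Tm F ar V} (i : Fin (ar f)) {t' : Tm F ar V} :
      Rw R (ts i) t' → Rw R (Tm.app f ts) (Tm.app f (Function.update ts i t'))

/-- The set of variables of a term. -/
def Vars {F : Type} {ar : F → ℕ} {X : Type} : Tm F ar X → Set X
  | .var x => {x}
  | .app _ ts => ⋃ i, Vars (ts i)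

/-- `R` is a TRS: no left-hand side is a variable,
and all variables of a right-hand side occur in the left-hand side. -/
def IsTRS {F : Type} {ar : F → ℕ} {X : Type}
    (R : Set (Tm F ar X × Tm F ar X)) : Prop :=
  ∀ p ∈ R, (∀ x : X, p.1 ≠ Tm.var x) ∧ Vars p.2 ⊆ Vars p.1

/-- A partial interpretation of the function symbols in a set `A`:
for every `n`-ary symbol a partial function `Aⁿ ⇀ A`. -/
abbrev Interp (F : Type) (ar : F → ℕ) (A : Type) : Type :=
  ∀ f : F, (Fin (ar f) → A) → Option A

/-- `Eval I α t a` : the (partial) interpretation of `t` under assignment `α`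
is defined and equal to `a`. -/
inductive Eval {F : Type} {ar : F → ℕ} {X A : Type}
    (I : Interp F ar A) (α : X → A) : Tm F ar X → A → Prop
  | var (x : X) : Eval I α (Tm.var x) (α x)
  | app {f : F} {ts : Fin (ar f) → Tm F ar X} (as : Fin (ar f) → A) {a : A}
      (hts : ∀ i, Eval I α (ts i) (as i)) (hI : I f as = some a) :
      Eval I α (Tm.app f ts) a

/-- A set `T` of ground terms is defined if the interpretation of
every `t ∈ T` is defined. -/
def DefinedOn {F : Type} {ar : F → ℕ} {A : Type}
    (I : Interp F ar A) (T : Set (Tm F ar Empty)) : Prop :=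
  ∀ t ∈ T, ∃ a : A, Eval I Empty.elim t a

/-- `succ` is a partial model for `R`: whenever the interpretation of a
left-hand side is defined, the right-hand side is defined as well and the
interpretations are related by `succ`. -/
def PartialModel {F : Type} {ar : F → ℕ} {X A : Type}
    (I : Interp F ar A) (succ : A → A → Prop)
    (R : Set (Tm F ar X × Tm F ar X)) : Prop :=
  ∀ p ∈ R, ∀ (α : X → A) (a : A), Eval I α p.1 a →
    ∃ b : A, Eval I α p.2 b ∧ succ a b

/-- A partial function is closed w.r.t. a relation. -/
def ClosedFn {A : Type} {n : ℕ} (g : (Fin n → A) → Option A)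
    (r : A → A → Prop) : Prop :=
  ∀ (v : Fin n → A) (i : Fin n) (b : A), r (v i) b → (g v).isSome →
    (g (Function.update v i b)).isSome

/-- A partial function is monotone w.r.t. a relation. -/
def MonoFn {A : Type} {n : ℕ} (g : (Fin n → A) → Option A)
    (r : A → A → Prop) : Prop :=
  ∀ (v : Fin n → A) (i : Fin n) (b : A) (x y : A), r (v i) b →
    g v = some x → g (Function.update v i b) = some y → r x y

/-- `(A, I, r)` is a monotone partial algebra: every interpretation is
closed and monotone with respect to `r`. -/
def MonoAlg {F : Type} {ar : F → ℕ} {A : Type}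
    (I : Interp F ar A) (r : A → A → Prop) : Prop :=
  ∀ f : F, ClosedFn (I f) r ∧ MonoFn (I f) r

/-- Well-foundedness: no infinite descending sequence. -/
def WFrel {A : Type} (r : A → A → Prop) : Prop :=
  ¬ ∃ f : ℕ → A, ∀ n : ℕ, r (f n) (f (n + 1))

/-- `r` is terminating on `T`: no element of `T` starts an infinite `r`-sequence. -/
def SNon {B : Type} (r : B → B → Prop) (T : Set B) : Prop :=
  ∀ t ∈ T, ¬ ∃ f : ℕ → B, f 0 = t ∧ ∀ n : ℕ, r (f n) (f (n + 1))

/-- Relative termination on `T`: no element of `T` starts an infinite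
`(r ∪ s)`-sequence containing infinitely many `r`-steps. -/
def SNrelOn {B : Type} (r s : B → B → Prop) (T : Set B) : Prop :=
  ∀ t ∈ T, ¬ ∃ f : ℕ → B, f 0 = t ∧
    (∀ n : ℕ, r (f n) (f (n + 1)) ∨ s (f n) (f (n + 1))) ∧
    (∀ m : ℕ, ∃ n : ℕ, m ≤ n ∧ r (f n) (f (n + 1)))

/-- Relative termination (on everything). -/
def SNrel {B : Type} (r s : B → B → Prop) : Prop := SNrelOn r s Set.univ


/-- The labelled signature: symbols `f` together with a tuple of labels `λ`
such that `I f λ` is defined. -/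
def FlabT {F : Type} {ar : F → ℕ} {A : Type} (I : Interp F ar A) : Type :=
  {p : Σ f : F, Fin (ar f) → A // (I p.1 p.2).isSome}

/-- Arity of labelled symbols. -/
def arLab {F : Type} {ar : F → ℕ} {A : Type} (I : Interp F ar A) :
    FlabT I → ℕ :=
  fun p => ar p.1.1

/-- `Lab I α t t'` : `t'` is the labelling of `t` with respect to the
assignment `α` (defined whenever the interpretation of `t` is defined): each
symbol gets labelled by the tuple of the values of its arguments. -/
inductive Lab {F : Type} {ar : F → ℕ} {X A : Type}
    (I : Interp F ar A) (α : X → A) :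
    Tm F ar X → Tm (FlabT I) (arLab I) X → Prop
  | var (x : X) : Lab I α (Tm.var x) (Tm.var x)
  | app {f : F} {ts : Fin (ar f) → Tm F ar X} (as : Fin (ar f) → A)
      (h : (I f as).isSome) (ts' : Fin (ar f) → Tm (FlabT I) (arLab I) X)
      (hev : ∀ i, Eval I α (ts i) (as i))
      (hlab : ∀ i, Lab I α (ts i) (ts' i)) :
      Lab I α (Tm.app f ts) (Tm.app ⟨⟨f, as⟩, h⟩ ts')

/-- The labelled TRS `lab_A(R)`: all labellings of rules of `R` under
assignments for which the left-hand side is defined. -/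
def labTRS {F : Type} {ar : F → ℕ} {X A : Type}
    (I : Interp F ar A) (R : Set (Tm F ar X × Tm F ar X)) :
    Set (Tm (FlabT I) (arLab I) X × Tm (FlabT I) (arLab I) X) :=
  {q | ∃ p ∈ R, ∃ α : X → A, (∃ a : A, Eval I α p.1 a) ∧
        Lab I α p.1 q.1 ∧ Lab I α p.2 q.2}

/-- The core of a partial algebra: the smallest subset closed under all
defined applications of the interpretations. -/
inductive InCore {F : Type} {ar : F → ℕ} {A : Type}
    (I : Interp F ar A) : A → Prop
  | mk {f : F} (as : Fin (ar f) → A) {a : A} :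
      (∀ i, InCore I (as i)) → I f as = some a → InCore I a

/-- The complement (within the core) of the set of normal forms `NF_A(R)`:
the smallest set containing the interpretations of left-hand sides (under
core-valued assignments) and closed under defined applications of the
interpretations with core arguments. -/
inductive NotNF {F : Type} {ar : F → ℕ} {X A : Type}
    (I : Interp F ar A) (R : Set (Tm F ar X × Tm F ar X)) : A → Prop
  | lhs {p : Tm F ar X × Tm F ar X} (hp : p ∈ R) (α : X → A)
      (hα : ∀ x : X, InCore I (α x)) {a : A} (h : Eval I α p.1 a) :
      NotNF I R a
  | up {f : F} (as : Fin (ar f) → A) (i : Fin (ar f)) {a : A} :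
      (∀ j, InCore I (as j)) → NotNF I R (as i) → I f as = some a →
      NotNF I R a

/-- The normal forms `NF_A(R)` of the partial algebra: the largest subset of
the core avoiding interpretations of left-hand sides and closed accordingly. -/
def NFset {F : Type} {ar : F → ℕ} {X A : Type}
    (I : Interp F ar A) (R : Set (Tm F ar X × Tm F ar X)) : Set A :=
  {a : A | InCore I a ∧ ¬ NotNF I R a}

/-- Interpretation of terms in a total algebra. -/
def evalT {F : Type} {ar : F → ℕ} {X B : Type}
    (J : ∀ f : F, (Fin (ar f) → B) → B) (β : X → B) : Tm F ar X → B
  | .var x => β x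
  | .app f ts => J f fun i => evalT J β (ts i)

/-- `(B, J, r)` is a (total) model for `R`. -/
def TModel {F : Type} {ar : F → ℕ} {X B : Type}
    (J : ∀ f : F, (Fin (ar f) → B) → B) (r : B → B → Prop)
    (R : Set (Tm F ar X × Tm F ar X)) : Prop :=
  ∀ p ∈ R, ∀ β : X → B, r (evalT J β p.1) (evalT J β p.2)

/-- `μ`-monotonicity of a total algebra w.r.t. a replacement map `μ`. -/
def MuMono {F : Type} {ar : F → ℕ} {B : Type}
    (J : ∀ f : F, (Fin (ar f) → B) → B) (μ : ∀ f : F, Set (Fin (ar f)))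
    (r : B → B → Prop) : Prop :=
  ∀ (f : F) (i : Fin (ar f)), i ∈ μ f → ∀ (v : Fin (ar f) → B) (b : B),
    r (v i) b → r (J f v) (J f (Function.update v i b))

/-- The replacement map `ν` on the labelled signature: all argument positions
except those whose label belongs to `NF_A(R)`. -/
def nuMap {F : Type} {ar : F → ℕ} {X A : Type}
    (I : Interp F ar A) (R : Set (Tm F ar X × Tm F ar X)) :
    ∀ p : FlabT I, Set (Fin (arLab I p)) :=
  fun p => {i : Fin (arLab I p) | p.1.2 i ∉ NFset I R}

section AuxLemmas

variable {F X A : Type} {ar : F → ℕ}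

theorem Rw.mono' {V : Type} {S₁ S₂ : Set (Tm F ar X × Tm F ar X)} (h : S₁ ⊆ S₂)
    {t s : Tm F ar V} (hr : Rw S₁ t s) : Rw S₂ t s := by
  induction hr with
  | rule hm σ => exact Rw.rule (h hm) σ
  | ctxt i _ ih => exact Rw.ctxt i ih

theorem Rw.union_elim {V : Type} {S₁ S₂ : Set (Tm F ar X × Tm F ar X)}
    {t s : Tm F ar V} (hr : Rw (S₁ ∪ S₂) t s) : Rw S₁ t s ∨ Rw S₂ t s := by
  induction hr with
  | rule hm σ =>
    rcases hm with hm | hm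
    · exact Or.inl (Rw.rule hm σ)
    · exact Or.inr (Rw.rule hm σ)
  | ctxt i _ ih =>
    rcases ih with ih | ih
    · exact Or.inl (Rw.ctxt i ih)
    · exact Or.inr (Rw.ctxt i ih)

theorem eval_det {Y : Type} {I : Interp F ar A} {α : Y → A} {t : Tm F ar Y} {a : A}
    (h1 : Eval I α t a) : ∀ {b : A}, Eval I α t b → a = b := by
  induction h1 with
  | var x => intro b h2; cases h2; rfl
  | app as hts hI ih =>
    intro b h2
    cases h2 with
    | app as2 hts2 hI2 =>
      have has : as = as2 := funext fun i => ih i (hts2 i)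
      subst has
      rw [hI] at hI2
      exact Option.some.inj hI2

theorem core_of_eval {I : Interp F ar A} {t : Tm F ar Empty} {a : A}
    (h : Eval I Empty.elim t a) : InCore I a := by
  induction h with
  | var x => exact x.elim
  | app as hts hI ih => exact InCore.mk as ih hI

theorem lab_exists {Y : Type} {I : Interp F ar A} {α : Y → A} {t : Tm F ar Y} {a : A}
    (h : Eval I α t a) : ∃ t', Lab I α t t' := by
  induction h with
  | app as hts hI ih =>
    choose ts' hts' using ih
    exact ⟨_, Lab.app as (by rw [hI]; rfl) ts' hts hts'⟩
  | var x => exact ⟨_, Lab.var x⟩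

theorem lab_det {Y : Type} {I : Interp F ar A} {α : Y → A} {t : Tm F ar Y}
    {t1 : Tm (FlabT I) (arLab I) Y} (h1 : Lab I α t t1) :
    ∀ {t2}, Lab I α t t2 → t1 = t2 := by
  induction h1 with
  | var x => intro t2 h2; cases h2; rfl
  | app as h ts' hev hlab ih =>
    intro t2 h2
    cases h2 with
    | app as2 h2' ts2' hev2 hlab2 =>
      have has : as = as2 := funext fun i => eval_det (hev i) (hev2 i)
      subst has
      have hts : ts' = ts2' := funext fun i => ih i (hlab2 i)
      subst hts
      rfl

theorem eval_subst_vars {W : Type} {I : Interp F ar A} {β : W → A} (σ : X → Tm F ar W) :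
    ∀ {u : Tm F ar X} {a : A}, Eval I β (subst σ u) a → ∀ x ∈ Vars u, ∃ c, Eval I β (σ x) c := by
  intro u
  induction u with
  | var x =>
    intro a h x' hx'
    have hx : x' = x := hx'
    subst hx
    exact ⟨a, h⟩
  | app f ts ih =>
    intro a h x hx
    cases h with
    | app as hts hI =>
      obtain ⟨i, hi⟩ := Set.mem_iUnion.1 hx
      exact ih i (hts i) x hi

theorem eval_subst_forward {W : Type} {I : Interp F ar A} {β : W → A} {σ : X → Tm F ar W}
    {α' : X → A} {u : Tm F ar X} {a : A} (h : Eval I α' u a) :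
    (∀ x ∈ Vars u, Eval I β (σ x) (α' x)) → Eval I β (subst σ u) a := by
  induction h with
  | var x => intro hσ; exact hσ x rfl
  | app as hts hI ih =>
    intro hσ
    exact Eval.app as (fun i => ih i fun x hx => hσ x (Set.mem_iUnion.2 ⟨i, hx⟩)) hI

theorem eval_subst_backward {W : Type} {I : Interp F ar A} {β : W → A} {σ : X → Tm F ar W}
    {α' : X → A} :
    ∀ {u : Tm F ar X} {a : A}, Eval I β (subst σ u) a →
      (∀ x ∈ Vars u, Eval I β (σ x) (α' x)) → Eval I α' u a := by
  intro u
  induction u with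
  | var x =>
    intro a h hσ
    have hax : a = α' x := eval_det h (hσ x rfl)
    rw [hax]
    exact Eval.var x
  | app f ts ih =>
    intro a h hσ
    cases h with
    | app as hts hI =>
      exact Eval.app as (fun i => ih i (hts i) fun x hx => hσ x (Set.mem_iUnion.2 ⟨i, hx⟩)) hI

theorem lab_subst_forward {W : Type} {I : Interp F ar A} {β : W → A} {σ : X → Tm F ar W}
    {σ' : X → Tm (FlabT I) (arLab I) W} {α' : X → A}
    {u : Tm F ar X} {u' : Tm (FlabT I) (arLab I) X} (hu : Lab I α' u u') :
    (∀ x ∈ Vars u, Lab I β (σ x) (σ' x)) → (∀ x ∈ Vars u, Eval I β (σ x) (α' x)) →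
    Lab I β (subst σ u) (subst σ' u') := by
  induction hu with
  | var x => intro hσl _; exact hσl x rfl
  | app as h ts' hev hlab ih =>
    intro hσl hσe
    exact Lab.app as h (fun i => subst σ' (ts' i))
      (fun i => eval_subst_forward (hev i) fun x hx => hσe x (Set.mem_iUnion.2 ⟨i, hx⟩))
      (fun i => ih i (fun x hx => hσl x (Set.mem_iUnion.2 ⟨i, hx⟩))
        (fun x hx => hσe x (Set.mem_iUnion.2 ⟨i, hx⟩)))

theorem evalT_subst {W B : Type} (J : ∀ f : F, (Fin (ar f) → B) → B) (β : W → B)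
    (σ : X → Tm F ar W) : ∀ u : Tm F ar X,
    evalT J β (subst σ u) = evalT J (fun x => evalT J β (σ x)) u
  | .var x => rfl
  | .app f ts => congrArg (J f) (funext fun i => evalT_subst J β σ (ts i))

end AuxLemmas
section AuxLemmas2

variable {F X A : Type} {ar : F → ℕ}

theorem notNF_of_rw {I : Interp F ar A} {W S : Set (Tm F ar X × Tm F ar X)} (hS : S ⊆ W)
    {t s : Tm F ar Empty} (hrw : Rw S t s) :
    ∀ a : A, Eval I Empty.elim t a → NotNF I W a := by
  induction hrw with
  | @rule l r h σ =>
    intro a hev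
    classical
    have hch : ∀ x ∈ Vars l, ∃ c, Eval I Empty.elim (σ x) c := eval_subst_vars σ hev
    set α' : X → A := fun x => if hx : ∃ c, Eval I Empty.elim (σ x) c then hx.choose else a
      with hα'
    have hσe : ∀ x ∈ Vars l, Eval I Empty.elim (σ x) (α' x) := by
      intro x hx
      have hc := hch x hx
      simp only [hα', dif_pos hc]
      exact hc.choose_spec
    have hcore : ∀ x, InCore I (α' x) := by
      intro x
      by_cases hc : ∃ c, Eval I Empty.elim (σ x) c
      · simp only [hα', dif_pos hc]; exact core_of_eval hc.choose_spec
      · simp only [hα', dif_neg hc]; exact core_of_eval hev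
    exact NotNF.lhs (hS h) α' hcore (eval_subst_backward hev hσe)
  | @ctxt f ts i s₀ hsub ih =>
    intro a hev
    cases hev with
    | app as hts hI =>
      exact NotNF.up as i (fun j => core_of_eval (hts j)) (ih (as i) (hts i)) hI

theorem eval_step {I : Interp F ar A} {ge : A → A → Prop}
    (hmono : MonoAlg I ge) {W S : Set (Tm F ar X × Tm F ar X)} (hS : S ⊆ W)
    (hWv : ∀ p ∈ W, Vars p.2 ⊆ Vars p.1) (hpm : PartialModel I ge W)
    {t s : Tm F ar Empty} (hrw : Rw S t s) :
    ∀ a : A, Eval I Empty.elim t a → ∃ b, Eval I Empty.elim s b ∧ ge a b := by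
  induction hrw with
  | @rule l r h σ =>
    intro a hev
    classical
    have hch : ∀ x ∈ Vars l, ∃ c, Eval I Empty.elim (σ x) c := eval_subst_vars σ hev
    set α' : X → A := fun x => if hx : ∃ c, Eval I Empty.elim (σ x) c then hx.choose else a
      with hα'
    have hσe : ∀ x ∈ Vars l, Eval I Empty.elim (σ x) (α' x) := by
      intro x hx
      have hc := hch x hx
      simp only [hα', dif_pos hc]
      exact hc.choose_spec
    have hl : Eval I α' l a := eval_subst_backward hev hσe
    obtain ⟨b, hr, hab⟩ := hpm (l, r) (hS h) α' a hl
    exact ⟨b, eval_subst_forward hr (fun x hx => hσe x (hWv _ (hS h) hx)), hab⟩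
  | @ctxt f ts i s₀ hsub ih =>
    intro a hev
    cases hev with
    | app as hts hI =>
      obtain ⟨b, hsb, hgb⟩ := ih (as i) (hts i)
      have hsome : (I f as).isSome := by rw [hI]; rfl
      have hcl := (hmono f).1 as i b hgb hsome
      obtain ⟨c, hc⟩ := Option.isSome_iff_exists.1 hcl
      refine ⟨c, Eval.app (Function.update as i b) (fun j => ?_) hc,
        (hmono f).2 as i b a c hgb hI hc⟩
      by_cases hj : j = i
      · subst hj; simp only [Function.update_self]; exact hsb
      · simp only [Function.update_of_ne hj]; exact hts j

theorem lift_rt {I : Interp F ar A} {B : Type} {J : ∀ p : FlabT I, (Fin (arLab I p) → B) → B}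
    {sq : B → B → Prop} {μ : ∀ p : FlabT I, Set (Fin (arLab I p))}
    (hmu : MuMono J μ sq) (p : FlabT I) (i : Fin (arLab I p)) (hi : i ∈ μ p)
    (bs : Fin (arLab I p) → B) {w y : B} (h : Relation.ReflTransGen sq w y) :
    Relation.ReflTransGen sq (J p (Function.update bs i w)) (J p (Function.update bs i y)) := by
  induction h with
  | refl => exact .refl
  | @tail b c hab hbc ih =>
    refine ih.tail ?_
    have hstep := hmu p i hi (Function.update bs i b) c (by simpa using hbc)
    rwa [Function.update_idem] at hstep

end AuxLemmas2
section KeyStep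

variable {F X A : Type} {ar : F → ℕ}

theorem key_step {I : Interp F ar A} {ge : A → A → Prop}
    {R R' U : Set (Tm F ar X × Tm F ar X)}
    (hmono : MonoAlg I ge) (hpm : PartialModel I ge (R ∪ R' ∪ U))
    {B : Type} (J : ∀ p : FlabT I, (Fin (arLab I p) → B) → B)
    (sq : B → B → Prop)
    {S : Set (Tm F ar X × Tm F ar X)} (hS1 : S ⊆ R ∪ R') (hS2 : S ⊆ R ∪ R' ∪ U)
    (hvars : ∀ p ∈ S, Vars p.2 ⊆ Vars p.1)
    (Rel : B → B → Prop)
    (hmodel : TModel J Rel (labTRS I S))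
    (hctx : ∀ (p : FlabT I) (i : Fin (arLab I p)), i ∈ nuMap I (R ∪ R') p →
      ∀ (bs : Fin (arLab I p) → B) (z : B), Rel (bs i) z →
        Rel (J p bs) (J p (Function.update bs i z)))
    (hshift : ∀ x y z : B, Rel x y → sq y z → Rel x z)
    (h3 : ∀ (f : F) (as : Fin (ar f) → A) (i : Fin (ar f)) (a' : A),
        ge (as i) a' →
        ∀ (hd1 : (I f as).isSome)
          (hd2 : (I f (Function.update as i a')).isSome)
          (bs : Fin (ar f) → B),
          sq (J ⟨⟨f, as⟩, hd1⟩ bs)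
             (J ⟨⟨f, Function.update as i a'⟩, hd2⟩ bs))
    {t s : Tm F ar Empty} (hrw : Rw S t s) :
    ∀ (a : A) (t' : Tm (FlabT I) (arLab I) Empty),
      Eval I Empty.elim t a → Lab I Empty.elim t t' →
      ∃ (b : A) (s' : Tm (FlabT I) (arLab I) Empty),
        Eval I Empty.elim s b ∧ Lab I Empty.elim s s' ∧ ge a b ∧
        Rel (evalT J Empty.elim t') (evalT J Empty.elim s') := by
  induction hrw with
  | @rule l r h σ =>
    intro a t' hev hlab
    classical
    have hch : ∀ x ∈ Vars l, ∃ c, Eval I Empty.elim (σ x) c := eval_subst_vars σ hev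
    set α' : X → A := fun x => if hx : ∃ c, Eval I Empty.elim (σ x) c then hx.choose else a
      with hα'
    have hσe : ∀ x ∈ Vars l, Eval I Empty.elim (σ x) (α' x) := by
      intro x hx
      have hc := hch x hx
      simp only [hα', dif_pos hc]
      exact hc.choose_spec
    have hl : Eval I α' l a := eval_subst_backward hev hσe
    obtain ⟨b, hr, hab⟩ := hpm (l, r) (hS2 h) α' a hl
    obtain ⟨l', hl'⟩ := lab_exists hl
    obtain ⟨r', hr'⟩ := lab_exists hr
    set σ' : X → Tm (FlabT I) (arLab I) Empty :=
      fun x => if hx : ∃ w, Lab I Empty.elim (σ x) w then hx.choose else t' with hσ'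
    have hσl : ∀ x ∈ Vars l, Lab I Empty.elim (σ x) (σ' x) := by
      intro x hx
      have hw : ∃ w, Lab I Empty.elim (σ x) w := lab_exists (hσe x hx)
      simp only [hσ', dif_pos hw]
      exact hw.choose_spec
    have hlt : Lab I Empty.elim (subst σ l) (subst σ' l') := lab_subst_forward hl' hσl hσe
    have ht'eq : t' = subst σ' l' := lab_det hlab hlt
    have hσer : ∀ x ∈ Vars r, Eval I Empty.elim (σ x) (α' x) :=
      fun x hx => hσe x (hvars _ h hx)
    have hσlr : ∀ x ∈ Vars r, Lab I Empty.elim (σ x) (σ' x) :=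
      fun x hx => hσl x (hvars _ h hx)
    refine ⟨b, subst σ' r', eval_subst_forward hr hσer,
      lab_subst_forward hr' hσlr hσer, hab, ?_⟩
    have hmem : (l', r') ∈ labTRS I S := ⟨(l, r), h, α', ⟨a, hl⟩, hl', hr'⟩
    have hmod := hmodel (l', r') hmem (fun x => evalT J Empty.elim (σ' x))
    rw [ht'eq, evalT_subst, evalT_subst]
    exact hmod
  | @ctxt f ts i s₀ hsub ih =>
    intro a t' hev hlab
    cases hev with
    | app as hts hI =>
      cases hlab with
      | app as2 h2 ts' hev2 hlab2 =>
        have has : as2 = as := funext fun j => eval_det (hev2 j) (hts j)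
        subst has
        obtain ⟨b, s₀', hsb, hlabs, hgeb, hRel⟩ := ih (as2 i) (ts' i) (hts i) (hlab2 i)
        have hd2 : (I f (Function.update as2 i b)).isSome := (hmono f).1 as2 i b hgeb h2
        obtain ⟨c, hc⟩ := Option.isSome_iff_exists.1 hd2
        have hgeac : ge a c := (hmono f).2 as2 i b a c hgeb hI hc
        have hnf : i ∈ nuMap I (R ∪ R') (⟨⟨f, as2⟩, h2⟩ : FlabT I) := by
          intro hmem
          exact hmem.2 (notNF_of_rw hS1 hsub (as2 i) (hts i))
        have hevU : ∀ j, Eval I Empty.elim (Function.update ts i s₀ j)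
            (Function.update as2 i b j) := by
          intro j
          by_cases hj : j = i
          · subst hj; simp only [Function.update_self]; exact hsb
          · simp only [Function.update_of_ne hj]; exact hts j
        have hlabU : ∀ j, Lab I Empty.elim (Function.update ts i s₀ j)
            (Function.update ts' i s₀' j) := by
          intro j
          by_cases hj : j = i
          · subst hj; simp only [Function.update_self]; exact hlabs
          · simp only [Function.update_of_ne hj]; exact hlab2 j
        refine ⟨c, Tm.app ⟨⟨f, Function.update as2 i b⟩, hd2⟩ (Function.update ts' i s₀'),
          Eval.app (Function.update as2 i b) hevU hc,
          Lab.app (Function.update as2 i b) hd2 (Function.update ts' i s₀') hevU hlabU,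
          hgeac, ?_⟩
        have hR1 : Rel (J ⟨⟨f, as2⟩, h2⟩ (fun j => evalT J Empty.elim (ts' j)))
            (J ⟨⟨f, as2⟩, h2⟩ (Function.update (fun j => evalT J Empty.elim (ts' j)) i
              (evalT J Empty.elim s₀'))) :=
          hctx ⟨⟨f, as2⟩, h2⟩ i hnf (fun j => evalT J Empty.elim (ts' j))
            (evalT J Empty.elim s₀') hRel
        have hsq := h3 f as2 i b hgeb h2 hd2
          (Function.update (fun j => evalT J Empty.elim (ts' j)) i (evalT J Empty.elim s₀'))
        have e2 : (fun j => evalT J Empty.elim (Function.update ts' i s₀' j)) =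
            Function.update (fun j => evalT J Empty.elim (ts' j)) i
              (evalT J Empty.elim s₀') := by
          funext j
          by_cases hj : j = i
          · subst hj; simp only [Function.update_self]
          · simp only [Function.update_of_ne hj]
        refine hshift _ _ _ hR1 ?_
        show sq _ (J ⟨⟨f, Function.update as2 i b⟩, hd2⟩ (fun j => evalT J Empty.elim (Function.update ts' i s₀' j)))
        exact (congrArg (fun v => sq (J ⟨⟨f, as2⟩, h2⟩ (Function.update (fun j => evalT J Empty.elim (ts' j)) i (evalT J Empty.elim s₀'))) (J ⟨⟨f, Function.update as2 i b⟩, hd2⟩ v)) e2).mpr hsq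

end KeyStep
section Flatten

theorem rt_fun {B : Type} {r : B → B → Prop} {z y : B} (h : Relation.ReflTransGen r z y) :
    ∃ (m : ℕ) (c : ℕ → B), c 0 = z ∧ c m = y ∧ ∀ j < m, r (c j) (c (j + 1)) := by
  induction h with
  | refl => exact ⟨0, fun _ => z, rfl, rfl, by omega⟩
  | @tail b y' hab hbc ih =>
    obtain ⟨m, c, h0, hm, hs⟩ := ih
    refine ⟨m + 1, fun j => if j = m + 1 then y' else c j, ?_, ?_, ?_⟩
    · simp only [if_neg (Ne.symm (Nat.succ_ne_zero m))]
      exact h0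
    · simp
    · intro j hj
      by_cases hjm : j = m
      · subst hjm
        simp only [if_neg (Nat.ne_of_lt (Nat.lt_succ_self j)), if_pos rfl]
        rw [hm]
        exact hbc
      · have h1 : j ≠ m + 1 := by omega
        have h2 : j + 1 ≠ m + 1 := by omega
        simp only [if_neg h1, if_neg h2]
        exact hs j (by omega)

theorem flatten {B : Type} {succ sq : B → B → Prop} (h : ℕ → B)
    (hh : ∀ j, ∃ z, succ (h j) z ∧
      Relation.ReflTransGen (fun x y => succ x y ∨ sq x y) z (h (j + 1))) :
    ∃ Fq : ℕ → B, (∀ k, succ (Fq k) (Fq (k + 1)) ∨ sq (Fq k) (Fq (k + 1))) ∧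
      ∀ m, ∃ k, m ≤ k ∧ succ (Fq k) (Fq (k + 1)) := by
  classical
  choose z hz1 hz2 using hh
  have hseg : ∀ j, ∃ (m : ℕ) (c : ℕ → B), c 0 = z j ∧ c m = h (j + 1) ∧
      ∀ i < m, succ (c i) (c (i + 1)) ∨ sq (c i) (c (i + 1)) := fun j => rt_fun (hz2 j)
  choose m c hc0 hcm hcs using hseg
  obtain ⟨d, hd0, hds⟩ : ∃ d : ℕ → ℕ → B, (∀ n, d n 0 = h n) ∧ ∀ n i, d n (i + 1) = c n i :=
    ⟨fun n i => Nat.rec (h n) (fun k _ => c n k) i, fun _ => rfl, fun _ _ => rfl⟩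
  have hdlast : ∀ n, d n (m n + 1) = h (n + 1) := by
    intro n; rw [hds, hcm]
  have hdstep : ∀ n i, i < m n + 1 →
      succ (d n i) (d n (i + 1)) ∨ sq (d n i) (d n (i + 1)) := by
    intro n i hi
    cases i with
    | zero => left; rw [hd0, hds, hc0]; exact hz1 n
    | succ i =>
      rw [hds, hds]
      exact hcs n i (by omega)
  have hdstep0 : ∀ n, succ (d n 0) (d n 1) := by
    intro n; rw [hd0, hds, hc0]; exact hz1 n
  obtain ⟨o, ho0, hos⟩ : ∃ o : ℕ → ℕ, o 0 = 0 ∧ ∀ n, o (n + 1) = o n + (m n + 1) :=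
    ⟨fun n => Nat.rec 0 (fun k acc => acc + (m k + 1)) n, rfl, fun _ => rfl⟩
  have homono : StrictMono o := strictMono_nat_of_lt_succ (fun n => by rw [hos]; omega)
  have hon : ∀ n, n ≤ o n := fun n => homono.le_apply
  obtain ⟨blk, hblkdef⟩ : ∃ blk : ℕ → ℕ, ∀ k, blk k = Nat.findGreatest (fun n => o n ≤ k) k :=
    ⟨_, fun _ => rfl⟩
  have hblk1 : ∀ k, o (blk k) ≤ k := by
    intro k
    rw [hblkdef]
    exact Nat.findGreatest_spec (P := fun n => o n ≤ k) (Nat.zero_le k) (show o 0 ≤ k by rw [ho0]; exact Nat.zero_le k)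
  have hblk2 : ∀ k, k < o (blk k + 1) := by
    intro k
    by_contra hcon
    push_neg at hcon
    have h1 : blk k + 1 ≤ k := le_trans (hon _) hcon
    have h2 := Nat.le_findGreatest (P := fun n => o n ≤ k) h1 hcon
    rw [← hblkdef] at h2
    omega
  have hblkeq : ∀ n k, o n ≤ k → k < o (n + 1) → blk k = n := by
    intro n k h1 h2
    have hub : blk k ≤ n := by
      by_contra hcon
      push_neg at hcon
      have h3 : o (n + 1) ≤ o (blk k) := homono.monotone (Nat.succ_le_of_lt hcon)
      have h4 := le_trans h3 (hblk1 k)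
      omega
    have hlb : n ≤ blk k := by
      rw [hblkdef]
      exact Nat.le_findGreatest (P := fun n => o n ≤ k) (le_trans (hon n) h1) h1
    omega
  have hnext : ∀ k, d (blk (k + 1)) (k + 1 - o (blk (k + 1))) =
      d (blk k) (k - o (blk k) + 1) := by
    intro k
    have h1 := hblk1 k
    have h2 := hblk2 k
    rcases lt_or_eq_of_le (Nat.succ_le_of_lt h2) with hlt | heq
    · have hb : blk (k + 1) = blk k := hblkeq _ _ (le_trans h1 (Nat.le_succ k)) hlt
      rw [hb]
      congr 1
      omega
    · have hstep2 : k + 1 < o (blk k + 1 + 1) := by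
        calc k + 1 = o (blk k + 1) := heq
        _ < o (blk k + 1 + 1) := homono (Nat.lt_succ_self _)
      have hb : blk (k + 1) = blk k + 1 := hblkeq _ _ (le_of_eq heq.symm) hstep2
      rw [hb]
      have h5 : k + 1 - o (blk k + 1) = 0 := by omega
      rw [h5, hd0]
      have h6 : k - o (blk k) + 1 = m (blk k) + 1 := by
        have := hos (blk k); omega
      rw [h6, hdlast]
  refine ⟨fun k => d (blk k) (k - o (blk k)), ?_, ?_⟩
  · intro k
    show succ (d (blk k) (k - o (blk k))) (d (blk (k + 1)) (k + 1 - o (blk (k + 1)))) ∨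
      sq (d (blk k) (k - o (blk k))) (d (blk (k + 1)) (k + 1 - o (blk (k + 1))))
    rw [hnext k]
    refine hdstep (blk k) (k - o (blk k)) ?_
    have := hos (blk k)
    have := hblk1 k
    have := hblk2 k
    omega
  · intro M
    refine ⟨o M, hon M, ?_⟩
    show succ (d (blk (o M)) (o M - o (blk (o M))))
      (d (blk (o M + 1)) (o M + 1 - o (blk (o M + 1))))
    have hb : blk (o M) = M := hblkeq M (o M) le_rfl (homono (Nat.lt_succ_self M))
    rw [hnext (o M), hb, Nat.sub_self]
    exact hdstep0 M

theorem no_inf_mixed {B : Type} {succ sq : B → B → Prop} (hwf : SNrel succ sq) (g : ℕ → B)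
    (hg : ∀ k, (∃ z, succ (g k) z ∧ Relation.ReflTransGen sq z (g (k + 1))) ∨
        Relation.ReflTransGen sq (g k) (g (k + 1)))
    (hginf : ∀ m, ∃ k, m ≤ k ∧ ∃ z, succ (g k) z ∧ Relation.ReflTransGen sq z (g (k + 1))) :
    False := by
  classical
  have hcomp : ∀ p q, p ≤ q →
      Relation.ReflTransGen (fun x y => succ x y ∨ sq x y) (g p) (g q) := by
    intro p q hpq
    induction q, hpq using Nat.le_induction with
    | base => exact .refl
    | succ q hq ih =>
      refine ih.trans ?_
      rcases hg q with ⟨z, h1, h2⟩ | hq2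
      · exact (Relation.ReflTransGen.single (r := fun x y => succ x y ∨ sq x y) (Or.inl h1)).trans
          (Relation.ReflTransGen.mono (p := fun x y => succ x y ∨ sq x y) (fun a b hb => Or.inr hb) _ _ h2)
      · exact Relation.ReflTransGen.mono (p := fun x y => succ x y ∨ sq x y) (fun a b hb => Or.inr hb) _ _ hq2
  choose ν hν1 hν2 using hginf
  obtain ⟨φ, hφ0, hφs⟩ : ∃ φ : ℕ → ℕ, φ 0 = ν 0 ∧ ∀ j, φ (j + 1) = ν (φ j + 1) :=
    ⟨fun j => Nat.rec (ν 0) (fun _ p => ν (p + 1)) j, rfl, fun _ => rfl⟩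
  have hφstrict : ∀ j, ∃ z, succ (g (φ j)) z ∧ Relation.ReflTransGen sq z (g (φ j + 1)) := by
    intro j
    cases j with
    | zero => rw [hφ0]; exact hν2 0
    | succ j => rw [hφs]; exact hν2 (φ j + 1)
  have hφmono : ∀ j, φ j + 1 ≤ φ (j + 1) := by
    intro j; rw [hφs]; exact hν1 (φ j + 1)
  have hh : ∀ j, ∃ z, succ (g (φ j)) z ∧
      Relation.ReflTransGen (fun x y => succ x y ∨ sq x y) z (g (φ (j + 1))) := by
    intro j
    obtain ⟨z, h1, h2⟩ := hφstrict j
    exact ⟨z, h1, (Relation.ReflTransGen.mono (p := fun x y => succ x y ∨ sq x y)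
      (fun a b hb => Or.inr hb) _ _ h2).trans (hcomp _ _ (hφmono j))⟩
  obtain ⟨Fq, hFstep, hFinf⟩ := flatten (fun j => g (φ j)) hh
  exact hwf (Fq 0) (Set.mem_univ _) ⟨Fq, rfl, hFstep, hFinf⟩

end Flatten
/-- Rule removal via a monotone partial model combined with
an extended well-founded `ν`-monotone algebra on the labelled signature. -/
theorem rule_removal_via_partial_model_and_labelled_algebra
    {F X : Type} {ar : F → ℕ}
    (R R' U : Set (Tm F ar X × Tm F ar X))
    (hR : IsTRS R) (hR' : IsTRS R') (hU : IsTRS U)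
    (T : Set (Tm F ar Empty))
    (hpre : SNrelOn (Rw U) (Rw (R ∪ R')) T)
    {A : Type} [Nonempty A] (I : Interp F ar A) (ge : A → A → Prop)
    (hmono : MonoAlg I ge)
    (hpm : PartialModel I ge (R ∪ R' ∪ U))
    (hT : DefinedOn I T)
    {B : Type} [Nonempty B]
    (J : ∀ p : FlabT I, (Fin (arLab I p) → B) → B)
    (succ sq : B → B → Prop)
    (hwf : SNrel succ sq)
    (hmu1 : MuMono J (nuMap I (R ∪ R')) succ)
    (hmu2 : MuMono J (nuMap I (R ∪ R')) sq)
    (h1 : TModel J succ (labTRS I R'))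
    (h2 : TModel J sq (labTRS I R))
    (h3 : ∀ (f : F) (as : Fin (ar f) → A) (i : Fin (ar f)) (a' : A),
        ge (as i) a' →
        ∀ (hd1 : (I f as).isSome)
          (hd2 : (I f (Function.update as i a')).isSome)
          (bs : Fin (ar f) → B),
          sq (J ⟨⟨f, as⟩, hd1⟩ bs)
             (J ⟨⟨f, Function.update as i a'⟩, hd2⟩ bs)) :
    SNrelOn (Rw (U ∪ R')) (Rw R) T := by
  intro t ht hcon
  obtain ⟨f, hf0, hstep, hinf⟩ := hcon
  classical
  have hWv : ∀ p ∈ R ∪ R' ∪ U, Vars p.2 ⊆ Vars p.1 := by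
    intro p hp
    rcases hp with (hp | hp) | hp
    · exact (hR p hp).2
    · exact (hR' p hp).2
    · exact (hU p hp).2
  have hstepW : ∀ n, Rw (R ∪ R' ∪ U) (f n) (f (n + 1)) := by
    intro n
    rcases hstep n with h | h
    · refine Rw.mono' ?_ h
      intro p hp
      rcases hp with hp | hp
      · exact Or.inr hp
      · exact Or.inl (Or.inr hp)
    · exact Rw.mono' (fun p hp => Or.inl (Or.inl hp)) h
  by_cases hUinf : ∀ m, ∃ n, m ≤ n ∧ Rw U (f n) (f (n + 1))
  · refine hpre t ht ⟨f, hf0, ?_, hUinf⟩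
    intro n
    rcases hstep n with h | h
    · rcases Rw.union_elim h with h | h
      · exact Or.inl h
      · exact Or.inr (Rw.mono' (fun p hp => Or.inr hp) h)
    · exact Or.inr (Rw.mono' (fun p hp => Or.inl hp) h)
  · push_neg at hUinf
    obtain ⟨N, hN⟩ := hUinf
    have hdef : ∀ k, ∃ a, Eval I Empty.elim (f k) a := by
      intro k
      induction k with
      | zero => rw [hf0]; exact hT t ht
      | succ k ih =>
        obtain ⟨a, ha⟩ := ih
        obtain ⟨b, hb, _⟩ := eval_step hmono subset_rfl hWv hpm (hstepW k) a ha
        exact ⟨b, hb⟩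
    choose aseq ha using hdef
    have hlabex : ∀ k, ∃ L, Lab I Empty.elim (f k) L := fun k => lab_exists (ha k)
    choose L hL using hlabex
    -- strict instantiation (for R' steps)
    have hkeyS : ∀ {u v : Tm F ar Empty}, Rw R' u v →
        ∀ (a : A) (t' : Tm (FlabT I) (arLab I) Empty),
          Eval I Empty.elim u a → Lab I Empty.elim u t' →
          ∃ (b : A) (s' : Tm (FlabT I) (arLab I) Empty),
            Eval I Empty.elim v b ∧ Lab I Empty.elim v s' ∧ ge a b ∧
            (∃ w, succ (evalT J Empty.elim t') w ∧
              Relation.ReflTransGen sq w (evalT J Empty.elim s')) := by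
      intro u v hrw
      refine key_step hmono hpm J sq (S := R') (fun p hp => Or.inr hp)
        (fun p hp => Or.inl (Or.inr hp)) (fun p hp => (hR' p hp).2)
        (fun x y => ∃ w, succ x w ∧ Relation.ReflTransGen sq w y)
        (fun p hp β => ⟨_, h1 p hp β, Relation.ReflTransGen.refl⟩) ?_ ?_ h3 hrw
      · intro p i hi bs z hz
        obtain ⟨w, hw1, hw2⟩ := hz
        exact ⟨J p (Function.update bs i w), hmu1 p i hi bs w hw1,
          lift_rt hmu2 p i hi bs hw2⟩
      · intro x y z hxy hyz
        exact ⟨hxy.choose, hxy.choose_spec.1, hxy.choose_spec.2.tail hyz⟩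
    -- weak instantiation (for R steps)
    have hkeyW : ∀ {u v : Tm F ar Empty}, Rw R u v →
        ∀ (a : A) (t' : Tm (FlabT I) (arLab I) Empty),
          Eval I Empty.elim u a → Lab I Empty.elim u t' →
          ∃ (b : A) (s' : Tm (FlabT I) (arLab I) Empty),
            Eval I Empty.elim v b ∧ Lab I Empty.elim v s' ∧ ge a b ∧
            Relation.ReflTransGen sq (evalT J Empty.elim t') (evalT J Empty.elim s') := by
      intro u v hrw
      exact key_step hmono hpm J sq (S := R) (fun p hp => Or.inl hp)
        (fun p hp => Or.inl (Or.inl hp)) (fun p hp => (hR p hp).2)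
        (Relation.ReflTransGen sq)
        (fun p hp β => Relation.ReflTransGen.single (h2 p hp β))
        (fun p i hi bs z hz => by
          have hlift := lift_rt hmu2 p i hi bs hz
          rwa [Function.update_eq_self] at hlift)
        (fun x y z hxy hyz => hxy.tail hyz) h3 hrw
    have hstrict : ∀ n, N ≤ n → Rw (U ∪ R') (f n) (f (n + 1)) →
        ∃ w, succ (evalT J Empty.elim (L n)) w ∧
          Relation.ReflTransGen sq w (evalT J Empty.elim (L (n + 1))) := by
      intro n hn h
      have hrw' : Rw R' (f n) (f (n + 1)) := by
        rcases Rw.union_elim h with h | h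
        · exact absurd h (hN n hn)
        · exact h
      obtain ⟨b, s', _, hlabs, _, hrel⟩ := hkeyS hrw' (aseq n) (L n) (ha n) (hL n)
      rwa [lab_det hlabs (hL (n + 1))] at hrel
    have hweak : ∀ n, Rw R (f n) (f (n + 1)) →
        Relation.ReflTransGen sq (evalT J Empty.elim (L n)) (evalT J Empty.elim (L (n + 1))) := by
      intro n h
      obtain ⟨b, s', _, hlabs, _, hrel⟩ := hkeyW h (aseq n) (L n) (ha n) (hL n)
      rwa [lab_det hlabs (hL (n + 1))] at hrel
    refine no_inf_mixed hwf (fun k => evalT J Empty.elim (L (N + k))) ?_ ?_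
    · intro k
      rcases hstep (N + k) with h | h
      · exact Or.inl (hstrict (N + k) (Nat.le_add_right N k) h)
      · exact Or.inr (hweak (N + k) h)
    · intro M
      obtain ⟨n, hn1, hn2⟩ := hinf (N + M)
      refine ⟨n - N, by omega, ?_⟩
      have hnn : N + (n - N) = n := by omega
      show ∃ w, succ (evalT J Empty.elim (L (N + (n - N)))) w ∧
        Relation.ReflTransGen sq w (evalT J Empty.elim (L (N + (n - N) + 1)))
      rw [hnn]
      exact hstrict n (by omega) hn2

end LocalTerm
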